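/- Let Φ ∈ S₂(E, E_*), let K₁^{max} be the reproducing kernel for the operator range of V* restricted to S₁^{max} ⊖ Z₁S₁^{max}. Then the reproducing kernel of H₁^{max} (the operator range of V*|_{S₁^{max}}) is K₁^{max}(z,w)/(1 − z₁w̄₁). -/

import Mathlib

/- STATEMENT 14: Let Φ ∈ S₂(E,E_*), and let K₁^{max} be the reproducing kernel of the
operator range of V* restricted to S₁^{max} ⊖ Z₁S₁^{max}.  Then the reproducing kernel of
H₁^{max} (the operator range of V*|_{S₁^{max}}) is K₁^{max}(z,w)/(1 − z₁w̄₁).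

H_Φ is the abstract RKHS `H` on the bidisk with kernel elements κ; the scattering space is
`KH` with the unitary Z = Z₁ and the canonical isometry V; S₁^{max} = `Smax` is a closed
Z-invariant subspace on which Z acts, V* intertwines Z with multiplication by z₁
(the operator `Mz1` on H), and the residual part ∩ₙ ZⁿSmax lies in ker V* (Wold, cf.
Statement 13).  N := Smax ⊖ Z·Smax.  The kernel element of H₁^{max} at (w,v) is
V* P_{Smax} V (κ w v) and that of the K₁^{max}-space is V* P_N V (κ w v); the conclusion
is the pointwise kernel identity
(V* P_{Smax} V κ_w v)(z) = (1 − z₁w̄₁)⁻¹ (V* P_N V κ_w v)(z),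
i.e. the kernel of H₁^{max} is K₁^{max}(z,w)/(1 − z₁w̄₁). -/

open scoped ComplexInnerProductSpace

theorem stmt_14 {Estar H KH : Type*}
    [NormedAddCommGroup Estar] [InnerProductSpace ℂ Estar] [CompleteSpace Estar]
    [NormedAddCommGroup H] [InnerProductSpace ℂ H] [CompleteSpace H]
    [NormedAddCommGroup KH] [InnerProductSpace ℂ KH] [CompleteSpace KH]
    (bidisk : Set (ℂ × ℂ)) (hbidisk : bidisk = {z : ℂ × ℂ | ‖z.1‖ < 1 ∧ ‖z.2‖ < 1})
    -- H_Φ as an RKHS on the bidisk: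
    (ev : H →ₗ[ℂ] (ℂ × ℂ) → Estar) (hev : Function.Injective ev)
    (κ : (ℂ × ℂ) → Estar → H)
    (hrep : ∀ (f : H), ∀ w ∈ bidisk, ∀ v : Estar, ⟪κ w v, f⟫ = ⟪v, ev f w⟫)
    -- multiplication by the coordinate z₁ on H_Φ:
    (Mz1 : H →L[ℂ] H)
    (hMz1 : ∀ (f : H), ∀ z ∈ bidisk, ev (Mz1 f) z = z.1 • ev f z)
    -- the canonical isometry V and the unitary Z₁ on the scattering space:
    (V : H →L[ℂ] KH) (hV : ∀ x : H, ‖V x‖ = ‖x‖)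
    (Z : KH →L[ℂ] KH)
    (hZu : ContinuousLinearMap.adjoint Z ∘L Z = 1 ∧ Z ∘L ContinuousLinearMap.adjoint Z = 1)
    -- S₁^{max}: closed, Z₁-invariant, V* intertwines Z₁ with Mz1 on it, and its residual
    -- Wold part lies in ker V*:
    (Smax : Submodule ℂ KH) [CompleteSpace Smax]
    (hSmaxZ : ∀ p ∈ Smax, Z p ∈ Smax)
    (hintertwine : ∀ p ∈ Smax,
      ContinuousLinearMap.adjoint V (Z p) = Mz1 (ContinuousLinearMap.adjoint V p))
    (hWold : ∀ p : KH, (∀ n : ℕ, ∃ q ∈ Smax, (Z ^ n) q = p) →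
      ContinuousLinearMap.adjoint V p = 0)
    -- N = S₁^{max} ⊖ Z₁S₁^{max}:
    (N : Submodule ℂ KH) [CompleteSpace N]
    (hN : N = Smax ⊓ (Submodule.map (Z : KH →ₗ[ℂ] KH) Smax)ᗮ) :
    -- the reproducing kernel of H₁^{max} is K₁^{max}(z,w)/(1 − z₁w̄₁):
    ∀ w ∈ bidisk, ∀ z ∈ bidisk, ∀ v : Estar,
      ev (ContinuousLinearMap.adjoint V ((Submodule.orthogonalProjectionOnto Smax (V (κ w v)) : Smax) : KH)) z =
        (1 - z.1 * (starRingEnd ℂ) w.1)⁻¹ •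
          ev (ContinuousLinearMap.adjoint V ((Submodule.orthogonalProjectionOnto N (V (κ w v)) : N) : KH)) z := by
  intro w hw z hz v
  set A := ContinuousLinearMap.adjoint V with hA
  set Zd := ContinuousLinearMap.adjoint Z with hZd
  set x := V (κ w v) with hx
  -- Z preserves inner products
  have hZadj : ∀ a : KH, Zd (Z a) = a := by
    intro a
    have := congrArg (fun T : KH →L[ℂ] KH => T a) hZu.1
    simpa using this
  have hZZ : ∀ a b : KH, ⟪Z a, Z b⟫ = ⟪a, b⟫ := by
    intro a b
    rw [← ContinuousLinearMap.adjoint_inner_left, ← hZd, hZadj]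
  -- projections onto Smax leave members of Smax fixed, etc.
  have hPof : ∀ s ∈ Smax, ((Submodule.orthogonalProjectionOnto Smax s : Smax) : KH) = s := fun s hs =>
    Submodule.starProjection_eq_self_iff.mpr hs
  have hQof : ∀ s ∈ N, ((Submodule.orthogonalProjectionOnto N s : N) : KH) = s := fun s hs =>
    Submodule.starProjection_eq_self_iff.mpr hs
  set Px : KH := ((Submodule.orthogonalProjectionOnto Smax x : Smax) : KH) with hPx
  set Qx : KH := ((Submodule.orthogonalProjectionOnto N x : N) : KH) with hQx
  set t : KH := ((Submodule.orthogonalProjectionOnto Smax (Zd x) : Smax) : KH) with ht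
  -- Qx is orthogonal to Z·Smax and belongs to Smax
  have hQxN : Qx ∈ N := SetLike.coe_mem _
  have hQxS : Qx ∈ Smax := by
    have := hQxN; rw [hN] at this; exact this.1
  have hQxperp : Qx ∈ (Submodule.map (Z : KH →ₗ[ℂ] KH) Smax)ᗮ := by
    have := hQxN; rw [hN] at this; exact this.2
  -- the discrepancy d vanishes
  set d : KH := Px - Qx - Z t with hd
  have hdS : d ∈ Smax := by
    refine Submodule.sub_mem _ (Submodule.sub_mem _ (SetLike.coe_mem _) hQxS) ?_
    exact hSmaxZ _ (SetLike.coe_mem _)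
  have hdperpZ : ∀ u ∈ Submodule.map (Z : KH →ₗ[ℂ] KH) Smax, ⟪d, u⟫ = 0 := by
    rintro u ⟨s, hs, rfl⟩
    show ⟪d, Z s⟫ = 0
    have h1 : ⟪Px, Z s⟫ = ⟪x, Z s⟫ := by
      rw [hPx, ← Submodule.starProjection_apply, Submodule.inner_starProjection_left_eq_right, Submodule.starProjection_apply, hPof _ (hSmaxZ s hs)]
    have h2 : ⟪Qx, Z s⟫ = 0 := by
      have := (Submodule.mem_orthogonal _ _).mp hQxperp (Z s) ⟨s, hs, rfl⟩
      simpa using congrArg (starRingEnd ℂ) this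
    have h3 : ⟪Z t, Z s⟫ = ⟪x, Z s⟫ := by
      rw [hZZ, ht, ← Submodule.starProjection_apply, Submodule.inner_starProjection_left_eq_right, Submodule.starProjection_apply, hPof _ hs,
        hZd, ContinuousLinearMap.adjoint_inner_left]
    simp only [hd, inner_sub_left, h1, h2, h3]
    ring
  have hdN : d ∈ N := by
    rw [hN]
    refine ⟨hdS, (Submodule.mem_orthogonal' _ _).mpr hdperpZ⟩
  have hdperpN : ∀ n ∈ N, ⟪d, n⟫ = 0 := by
    intro n hn
    have hnS : n ∈ Smax := by rw [hN] at hn; exact hn.1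
    have hnperp : n ∈ (Submodule.map (Z : KH →ₗ[ℂ] KH) Smax)ᗮ := by
      rw [hN] at hn; exact hn.2
    have h1 : ⟪Px, n⟫ = ⟪x, n⟫ := by
      rw [hPx, ← Submodule.starProjection_apply, Submodule.inner_starProjection_left_eq_right, Submodule.starProjection_apply, hPof _ hnS]
    have h2 : ⟪Qx, n⟫ = ⟪x, n⟫ := by
      rw [hQx, ← Submodule.starProjection_apply, Submodule.inner_starProjection_left_eq_right, Submodule.starProjection_apply, hQof _ hn]
    have h3 : ⟪Z t, n⟫ = 0 :=
      (Submodule.mem_orthogonal _ _).mp hnperp (Z t) ⟨t, SetLike.coe_mem _, rfl⟩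
    simp only [hd, inner_sub_left, h1, h2, h3]
    ring
  have hd0 : d = 0 := by
    have := hdperpN d hdN
    exact inner_self_eq_zero.mp this
  have hsplit : Px = Qx + Z t := by
    have : Px - Qx - Z t = 0 := hd0
    linear_combination (norm := abel) this
  -- key scalar identities
  have key : ∀ v' : Estar,
      ⟪V (κ z v'), Px⟫ = ⟪V (κ z v'), Qx⟫ + z.1 * (starRingEnd ℂ) w.1 * ⟪V (κ z v'), Px⟫ := by
    intro v'
    set k : KH := V (κ z v') with hk
    have step1 : ⟪k, Z t⟫ = z.1 * ⟪k, t⟫ := by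
      have e1 : ⟪k, Z t⟫ = ⟪κ z v', A (Z t)⟫ := by
        rw [hk, hA, ContinuousLinearMap.adjoint_inner_right]
      have e2 : A (Z t) = Mz1 (A t) := hintertwine t (SetLike.coe_mem _)
      have e3 : ⟪κ z v', Mz1 (A t)⟫ = z.1 * ⟪κ z v', A t⟫ := by
        rw [hrep _ z hz, hrep _ z hz, hMz1 _ z hz, inner_smul_right]
      have e4 : ⟪κ z v', A t⟫ = ⟪k, t⟫ := by
        rw [hk, hA, ContinuousLinearMap.adjoint_inner_right]
      rw [e1, e2, e3, e4]
    have step2 : ⟪k, t⟫ = (starRingEnd ℂ) w.1 * ⟪k, Px⟫ := by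
      set Pk : KH := ((Submodule.orthogonalProjectionOnto Smax k : Smax) : KH) with hPk
      have e1 : ⟪k, t⟫ = ⟪Pk, Zd x⟫ := by
        rw [ht, ← Submodule.starProjection_apply, ← Submodule.inner_starProjection_left_eq_right, Submodule.starProjection_apply]
      have e2 : ⟪Pk, Zd x⟫ = ⟪Z Pk, x⟫ := by
        rw [hZd, ContinuousLinearMap.adjoint_inner_right]
      have e3 : ⟪Z Pk, x⟫ = ⟪A (Z Pk), κ w v⟫ := by
        rw [hx, hA, ContinuousLinearMap.adjoint_inner_left]
      have e4 : A (Z Pk) = Mz1 (A Pk) := hintertwine Pk (SetLike.coe_mem _)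
      have e5 : ⟪Mz1 (A Pk), κ w v⟫ = (starRingEnd ℂ) w.1 * ⟪A Pk, κ w v⟫ := by
        rw [← inner_conj_symm, hrep _ w hw, hMz1 _ w hw, inner_smul_right,
          map_mul, ← hrep _ w hw, inner_conj_symm]
      have e6 : ⟪A Pk, κ w v⟫ = ⟪Pk, x⟫ := by
        rw [hx, hA, ContinuousLinearMap.adjoint_inner_left]
      have e7 : ⟪Pk, x⟫ = ⟪k, Px⟫ := by
        rw [hPk, hPx, ← Submodule.starProjection_apply, Submodule.inner_starProjection_left_eq_right, Submodule.starProjection_apply]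
      rw [e1, e2, e3, e4, e5, e6, e7]
    calc ⟪k, Px⟫ = ⟪k, Qx + Z t⟫ := by rw [← hsplit]
      _ = ⟪k, Qx⟫ + ⟪k, Z t⟫ := inner_add_right _ _ _
      _ = ⟪k, Qx⟫ + z.1 * (starRingEnd ℂ) w.1 * ⟪k, Px⟫ := by
          rw [step1, step2]; ring
  -- the factor 1 - z₁ w̄₁ is nonzero
  have hc : (1 : ℂ) - z.1 * (starRingEnd ℂ) w.1 ≠ 0 := by
    rw [hbidisk] at hw hz
    intro h
    have h1 : z.1 * (starRingEnd ℂ) w.1 = 1 := by linear_combination -h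
    have : ‖z.1 * (starRingEnd ℂ) w.1‖ < 1 := by
      rw [norm_mul, RCLike.norm_conj]
      calc ‖z.1‖ * ‖w.1‖ ≤ 1 * ‖w.1‖ := by
            exact mul_le_mul_of_nonneg_right hz.1.le (norm_nonneg _)
        _ = ‖w.1‖ := one_mul _
        _ < 1 := hw.1
    rw [h1] at this
    simp at this
  -- conclude
  apply ext_inner_left ℂ
  intro v'
  have hL : ⟪v', ev (A Px) z⟫ = ⟪V (κ z v'), Px⟫ := by
    rw [← hrep _ z hz, hA, ContinuousLinearMap.adjoint_inner_right]
  have hR : ⟪v', ev (A Qx) z⟫ = ⟪V (κ z v'), Qx⟫ := by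
    rw [← hrep _ z hz, hA, ContinuousLinearMap.adjoint_inner_right]
  rw [inner_smul_right, hL, hR]
  have := key v'
  field_simp
  linear_combination this
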